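/- If a random variable U with finite second moment satisfies U =ᵈ V²·U* + (1−V)²·U + V² with U, U*, V independent, U* =ᵈ U, V ~ Uniform[0,1], then E[U²] = 11/9 and Var(U) = 2/9. -/

import Mathlib

open MeasureTheory ProbabilityTheory

/-- If `U` with finite second moment satisfies `U =ᵈ V²·U* + (1−V)²·U + V²` with
`U, U*, V` independent, `U* =ᵈ U`, `V ~ Uniform[0,1]`, then `E[U²] = 11/9` and
`Var(U) = 2/9`. -/
theorem fixed_point_second_moment
    {Ω : Type*} [MeasureSpace Ω] [IsProbabilityMeasure (ℙ : Measure Ω)]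
    (U Ustar V : Ω → ℝ)
    (hUm : Measurable U) (hUsm : Measurable Ustar) (hVm : Measurable V)
    (hindep : iIndepFun ![U, Ustar, V] ℙ)
    (hid : Measure.map Ustar ℙ = Measure.map U ℙ)
    (hunif : Measure.map V ℙ = volume.restrict (Set.Icc (0 : ℝ) 1))
    (hfix : Measure.map (fun ω => (V ω) ^ 2 * Ustar ω + (1 - V ω) ^ 2 * U ω + (V ω) ^ 2) ℙ
      = Measure.map U ℙ)
    (hint : Integrable U ℙ) (hint2 : Integrable (fun ω => (U ω) ^ 2) ℙ) :
    (∫ ω, (U ω) ^ 2 ∂ℙ = 11 / 9) ∧ variance U ℙ = 2 / 9 := by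
  set μ := Measure.map U ℙ with hμdef
  set ν := volume.restrict (Set.Icc (0 : ℝ) 1) with hνdef
  have hμp : IsProbabilityMeasure μ := Measure.isProbabilityMeasure_map hUm.aemeasurable
  have hνp : IsProbabilityMeasure ν := by
    constructor
    rw [hνdef, Measure.restrict_apply_univ, Real.volume_Icc]
    norm_num
  have hmeas : ∀ i : Fin 3, Measurable (![U, Ustar, V] i) := by
    intro i; fin_cases i <;> assumption
  -- joint law is the product measure
  have h12 : IndepFun U Ustar ℙ := hindep.indepFun (show (0 : Fin 3) ≠ 1 by decide)
  have hmap2 : Measure.map (fun ω => (U ω, Ustar ω)) ℙ = μ.prod μ := by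
    rw [(indepFun_iff_map_prod_eq_prod_map_map hUm.aemeasurable hUsm.aemeasurable).mp h12,
      hid]
  have h3 : IndepFun (fun ω => (U ω, Ustar ω)) V ℙ := by
    have := hindep.indepFun_prodMk hmeas 0 1 2 (by decide) (by decide)
    simpa using this
  have htuplem : Measurable (fun ω => ((U ω, Ustar ω), V ω)) :=
    (hUm.prodMk hUsm).prodMk hVm
  have hmap3 : Measure.map (fun ω => ((U ω, Ustar ω), V ω)) ℙ = (μ.prod μ).prod ν := by
    rw [(indepFun_iff_map_prod_eq_prod_map_map (hUm.prodMk hUsm).aemeasurable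
      hVm.aemeasurable).mp h3, hmap2, hunif]
  -- moments of ν
  have hνc : ∀ f : ℝ → ℝ, Continuous f → Integrable f ν := fun f hf => hf.integrableOn_Icc
  have hνmom : ∀ k : ℕ, ∫ x, x ^ k ∂ν = 1 / (k + 1) := by
    intro k
    rw [hνdef, integral_Icc_eq_integral_Ioc, ← intervalIntegral.integral_of_le zero_le_one,
      integral_pow]
    simp
  have hνmom' : ∀ k : ℕ, ∫ x, (1 - x) ^ k ∂ν = 1 / (k + 1) := by
    intro k
    rw [hνdef, integral_Icc_eq_integral_Ioc, ← intervalIntegral.integral_of_le zero_le_one,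
      intervalIntegral.integral_comp_sub_left (fun x => x ^ k) 1]
    norm_num [integral_pow]
  have hνmix : ∫ v, v ^ 2 * (1 - v) ^ 2 ∂ν = 1 / 30 := by
    rw [hνdef, integral_Icc_eq_integral_Ioc, ← intervalIntegral.integral_of_le zero_le_one]
    have h : ∫ x in (0:ℝ)..1, x ^ 2 * (1 - x) ^ 2 = ∫ x in (0:ℝ)..1, (x ^ 2 - 2 * x ^ 3 + x ^ 4) := by
      apply intervalIntegral.integral_congr; intro x _; ring
    have c1 : IntervalIntegrable (fun x : ℝ => x ^ 2) volume 0 1 :=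
      (continuous_pow 2).intervalIntegrable 0 1
    have c2 : IntervalIntegrable (fun x : ℝ => 2 * x ^ 3) volume 0 1 :=
      (by continuity : Continuous fun x : ℝ => 2 * x ^ 3).intervalIntegrable 0 1
    have c3 : IntervalIntegrable (fun x : ℝ => x ^ 4) volume 0 1 :=
      (continuous_pow 4).intervalIntegrable 0 1
    rw [h, intervalIntegral.integral_add (c1.sub c2) c3, intervalIntegral.integral_sub c1 c2,
      intervalIntegral.integral_const_mul]
    norm_num [integral_pow]
  -- moments of μ
  set m1 := ∫ x, x ∂μ with hm1def
  set m2 := ∫ x, x ^ 2 ∂μ with hm2def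
  have Iμ1 : Integrable (fun x : ℝ => x) μ := by
    rw [hμdef]
    exact (integrable_map_measure aestronglyMeasurable_id hUm.aemeasurable).mpr hint
  have Iμ2 : Integrable (fun x : ℝ => x ^ 2) μ := by
    rw [hμdef]
    exact (integrable_map_measure ((continuous_pow 2).aestronglyMeasurable)
      hUm.aemeasurable).mpr hint2
  -- integrability and integrals over μ.prod μ
  have Ia : Integrable (fun q : ℝ × ℝ => q.1) (μ.prod μ) := by
    simpa using Iμ1.mul_prod (integrable_const (1 : ℝ))
  have Ib : Integrable (fun q : ℝ × ℝ => q.2) (μ.prod μ) := by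
    simpa using (integrable_const (1 : ℝ)).mul_prod Iμ1
  have Iab : Integrable (fun q : ℝ × ℝ => q.1 * q.2) (μ.prod μ) := Iμ1.mul_prod Iμ1
  have Ia2 : Integrable (fun q : ℝ × ℝ => q.1 ^ 2) (μ.prod μ) := by
    simpa using Iμ2.mul_prod (integrable_const (1 : ℝ))
  have Ib2 : Integrable (fun q : ℝ × ℝ => q.2 ^ 2) (μ.prod μ) := by
    simpa using (integrable_const (1 : ℝ)).mul_prod Iμ2
  have Ea : ∫ q : ℝ × ℝ, q.1 ∂(μ.prod μ) = m1 := by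
    simpa using integral_prod_mul (μ := μ) (ν := μ) (fun x : ℝ => x) (fun _ : ℝ => (1 : ℝ))
  have Eb : ∫ q : ℝ × ℝ, q.2 ∂(μ.prod μ) = m1 := by
    simpa using integral_prod_mul (μ := μ) (ν := μ) (fun _ : ℝ => (1 : ℝ)) (fun x : ℝ => x)
  have Eab : ∫ q : ℝ × ℝ, q.1 * q.2 ∂(μ.prod μ) = m1 * m1 :=
    integral_prod_mul (μ := μ) (ν := μ) (fun x : ℝ => x) (fun x : ℝ => x)
  have Ea2 : ∫ q : ℝ × ℝ, q.1 ^ 2 ∂(μ.prod μ) = m2 := by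
    simpa using integral_prod_mul (μ := μ) (ν := μ) (fun x : ℝ => x ^ 2) (fun _ : ℝ => (1 : ℝ))
  have Eb2 : ∫ q : ℝ × ℝ, q.2 ^ 2 ∂(μ.prod μ) = m2 := by
    simpa using integral_prod_mul (μ := μ) (ν := μ) (fun _ : ℝ => (1 : ℝ)) (fun x : ℝ => x ^ 2)
  -- transfer of the fixed point equation
  set ρ := (μ.prod μ).prod ν with hρdef
  have key : ∀ k : ℕ,
      ∫ p : (ℝ × ℝ) × ℝ, (p.2 ^ 2 * p.1.2 + (1 - p.2) ^ 2 * p.1.1 + p.2 ^ 2) ^ k ∂ρ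
        = ∫ x, x ^ k ∂μ := by
    intro k
    have hWm : Measurable (fun ω => V ω ^ 2 * Ustar ω + (1 - V ω) ^ 2 * U ω + V ω ^ 2) := by
      fun_prop
    have hg : Measurable
        (fun p : (ℝ × ℝ) × ℝ => (p.2 ^ 2 * p.1.2 + (1 - p.2) ^ 2 * p.1.1 + p.2 ^ 2) ^ k) := by
      fun_prop
    rw [← hmap3, integral_map htuplem.aemeasurable hg.aestronglyMeasurable, ← hfix,
      integral_map hWm.aemeasurable ((continuous_pow k).aestronglyMeasurable)]
  -- first moment equation
  have e1 : m1 = m1 * (1 / 3) + m1 * (1 / 3) + 1 * (1 / 3) := by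
    have h := key 1
    simp only [pow_one] at h
    rw [← hm1def] at h
    refine h.symm.trans ?_
    have hsplit : (fun p : (ℝ × ℝ) × ℝ => p.2 ^ 2 * p.1.2 + (1 - p.2) ^ 2 * p.1.1 + p.2 ^ 2)
        = fun p : (ℝ × ℝ) × ℝ => p.1.2 * p.2 ^ 2 + p.1.1 * (1 - p.2) ^ 2 + 1 * p.2 ^ 2 := by
      funext p; ring
    have h1 : Integrable (fun p : (ℝ × ℝ) × ℝ => p.1.2 * p.2 ^ 2) ρ :=
      Ib.mul_prod (hνc _ (continuous_pow 2))
    have h2 : Integrable (fun p : (ℝ × ℝ) × ℝ => p.1.1 * (1 - p.2) ^ 2) ρ :=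
      Ia.mul_prod (hνc (fun v => (1 - v) ^ 2) (by fun_prop))
    have h3 : Integrable (fun p : (ℝ × ℝ) × ℝ => (1 : ℝ) * p.2 ^ 2) ρ :=
      (integrable_const 1).mul_prod (hνc _ (continuous_pow 2))
    have h12 : Integrable
        (fun p : (ℝ × ℝ) × ℝ => p.1.2 * p.2 ^ 2 + p.1.1 * (1 - p.2) ^ 2) ρ := h1.add h2
    have T1 : ∫ a : (ℝ × ℝ) × ℝ, a.1.2 * a.2 ^ 2 ∂((μ.prod μ).prod ν)
        = (∫ q : ℝ × ℝ, q.2 ∂(μ.prod μ)) * ∫ v, v ^ 2 ∂ν :=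
      integral_prod_mul (fun q : ℝ × ℝ => q.2) (fun v : ℝ => v ^ 2)
    have T2 : ∫ a : (ℝ × ℝ) × ℝ, a.1.1 * (1 - a.2) ^ 2 ∂((μ.prod μ).prod ν)
        = (∫ q : ℝ × ℝ, q.1 ∂(μ.prod μ)) * ∫ v, (1 - v) ^ 2 ∂ν :=
      integral_prod_mul (fun q : ℝ × ℝ => q.1) (fun v : ℝ => (1 - v) ^ 2)
    have T3 : ∫ a : (ℝ × ℝ) × ℝ, (1 : ℝ) * a.2 ^ 2 ∂((μ.prod μ).prod ν)
        = (∫ _ : ℝ × ℝ, (1 : ℝ) ∂(μ.prod μ)) * ∫ v, v ^ 2 ∂ν :=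
      integral_prod_mul (fun _ : ℝ × ℝ => (1 : ℝ)) (fun v : ℝ => v ^ 2)
    have t2 : ∫ v, v ^ 2 ∂ν = 1 / 3 := by norm_num [hνmom 2]
    have t2' : ∫ v, (1 - v) ^ 2 ∂ν = 1 / 3 := by norm_num [hνmom' 2]
    rw [hsplit, integral_add h12 h3, integral_add h1 h2, hρdef, T1, T2, T3, Ea, Eb, t2, t2']
    simp
  have hm1 : m1 = 1 := by linarith
  -- second moment equation
  have e2 : m2 = m2 * (1 / 5) + m2 * (1 / 5) + 1 * (1 / 5)
      + (m1 * m1) * (2 * (1 / 30)) + m1 * (2 * (1 / 5)) + m1 * (2 * (1 / 30)) := by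
    have h := key 2
    rw [← hm2def] at h
    refine h.symm.trans ?_
    have hsplit : (fun p : (ℝ × ℝ) × ℝ =>
        (p.2 ^ 2 * p.1.2 + (1 - p.2) ^ 2 * p.1.1 + p.2 ^ 2) ^ 2)
        = fun p : (ℝ × ℝ) × ℝ =>
          p.1.2 ^ 2 * p.2 ^ 4 + p.1.1 ^ 2 * (1 - p.2) ^ 4 + 1 * p.2 ^ 4
          + (p.1.1 * p.1.2) * (2 * (p.2 ^ 2 * (1 - p.2) ^ 2))
          + p.1.2 * (2 * p.2 ^ 4) + p.1.1 * (2 * (p.2 ^ 2 * (1 - p.2) ^ 2)) := by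
      funext p; ring
    have h1 : Integrable (fun p : (ℝ × ℝ) × ℝ => p.1.2 ^ 2 * p.2 ^ 4) ρ :=
      Ib2.mul_prod (hνc _ (continuous_pow 4))
    have h2 : Integrable (fun p : (ℝ × ℝ) × ℝ => p.1.1 ^ 2 * (1 - p.2) ^ 4) ρ :=
      Ia2.mul_prod (hνc (fun v => (1 - v) ^ 4) (by fun_prop))
    have h3 : Integrable (fun p : (ℝ × ℝ) × ℝ => (1 : ℝ) * p.2 ^ 4) ρ :=
      (integrable_const 1).mul_prod (hνc _ (continuous_pow 4))
    have h4 : Integrable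
        (fun p : (ℝ × ℝ) × ℝ => (p.1.1 * p.1.2) * (2 * (p.2 ^ 2 * (1 - p.2) ^ 2))) ρ :=
      Iab.mul_prod (hνc (fun v => 2 * (v ^ 2 * (1 - v) ^ 2)) (by fun_prop))
    have h5 : Integrable (fun p : (ℝ × ℝ) × ℝ => p.1.2 * (2 * p.2 ^ 4)) ρ :=
      Ib.mul_prod (hνc (fun v => 2 * v ^ 4) (by fun_prop))
    have h6 : Integrable
        (fun p : (ℝ × ℝ) × ℝ => p.1.1 * (2 * (p.2 ^ 2 * (1 - p.2) ^ 2))) ρ :=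
      Ia.mul_prod (hνc (fun v => 2 * (v ^ 2 * (1 - v) ^ 2)) (by fun_prop))
    have s12 : Integrable (fun p : (ℝ × ℝ) × ℝ =>
        p.1.2 ^ 2 * p.2 ^ 4 + p.1.1 ^ 2 * (1 - p.2) ^ 4) ρ := h1.add h2
    have s13 : Integrable (fun p : (ℝ × ℝ) × ℝ =>
        p.1.2 ^ 2 * p.2 ^ 4 + p.1.1 ^ 2 * (1 - p.2) ^ 4 + 1 * p.2 ^ 4) ρ := s12.add h3
    have s14 : Integrable (fun p : (ℝ × ℝ) × ℝ =>
        p.1.2 ^ 2 * p.2 ^ 4 + p.1.1 ^ 2 * (1 - p.2) ^ 4 + 1 * p.2 ^ 4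
          + (p.1.1 * p.1.2) * (2 * (p.2 ^ 2 * (1 - p.2) ^ 2))) ρ := s13.add h4
    have s15 : Integrable (fun p : (ℝ × ℝ) × ℝ =>
        p.1.2 ^ 2 * p.2 ^ 4 + p.1.1 ^ 2 * (1 - p.2) ^ 4 + 1 * p.2 ^ 4
          + (p.1.1 * p.1.2) * (2 * (p.2 ^ 2 * (1 - p.2) ^ 2)) + p.1.2 * (2 * p.2 ^ 4)) ρ :=
      s14.add h5
    have T1 : ∫ a : (ℝ × ℝ) × ℝ, a.1.2 ^ 2 * a.2 ^ 4 ∂((μ.prod μ).prod ν)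
        = (∫ q : ℝ × ℝ, q.2 ^ 2 ∂(μ.prod μ)) * ∫ v, v ^ 4 ∂ν :=
      integral_prod_mul (fun q : ℝ × ℝ => q.2 ^ 2) (fun v : ℝ => v ^ 4)
    have T2 : ∫ a : (ℝ × ℝ) × ℝ, a.1.1 ^ 2 * (1 - a.2) ^ 4 ∂((μ.prod μ).prod ν)
        = (∫ q : ℝ × ℝ, q.1 ^ 2 ∂(μ.prod μ)) * ∫ v, (1 - v) ^ 4 ∂ν :=
      integral_prod_mul (fun q : ℝ × ℝ => q.1 ^ 2) (fun v : ℝ => (1 - v) ^ 4)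
    have T3 : ∫ a : (ℝ × ℝ) × ℝ, (1 : ℝ) * a.2 ^ 4 ∂((μ.prod μ).prod ν)
        = (∫ _ : ℝ × ℝ, (1 : ℝ) ∂(μ.prod μ)) * ∫ v, v ^ 4 ∂ν :=
      integral_prod_mul (fun _ : ℝ × ℝ => (1 : ℝ)) (fun v : ℝ => v ^ 4)
    have T4 : ∫ a : (ℝ × ℝ) × ℝ, (a.1.1 * a.1.2) * (2 * (a.2 ^ 2 * (1 - a.2) ^ 2))
          ∂((μ.prod μ).prod ν)
        = (∫ q : ℝ × ℝ, q.1 * q.2 ∂(μ.prod μ)) * ∫ v, 2 * (v ^ 2 * (1 - v) ^ 2) ∂ν :=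
      integral_prod_mul (fun q : ℝ × ℝ => q.1 * q.2) (fun v : ℝ => 2 * (v ^ 2 * (1 - v) ^ 2))
    have T5 : ∫ a : (ℝ × ℝ) × ℝ, a.1.2 * (2 * a.2 ^ 4) ∂((μ.prod μ).prod ν)
        = (∫ q : ℝ × ℝ, q.2 ∂(μ.prod μ)) * ∫ v, 2 * v ^ 4 ∂ν :=
      integral_prod_mul (fun q : ℝ × ℝ => q.2) (fun v : ℝ => 2 * v ^ 4)
    have t4 : ∫ v, v ^ 4 ∂ν = 1 / 5 := by norm_num [hνmom 4]
    have t4' : ∫ v, (1 - v) ^ 4 ∂ν = 1 / 5 := by norm_num [hνmom' 4]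
    have tm : ∫ v, 2 * (v ^ 2 * (1 - v) ^ 2) ∂ν = 2 * (1 / 30) := by
      rw [integral_const_mul, hνmix]
    have t4'' : ∫ v, 2 * v ^ 4 ∂ν = 2 * (1 / 5) := by
      rw [integral_const_mul]
      norm_num [hνmom 4]
    have T6 : ∫ a : (ℝ × ℝ) × ℝ, a.1.1 * (2 * (a.2 ^ 2 * (1 - a.2) ^ 2)) ∂((μ.prod μ).prod ν)
        = (∫ q : ℝ × ℝ, q.1 ∂(μ.prod μ)) * ∫ v, 2 * (v ^ 2 * (1 - v) ^ 2) ∂ν :=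
      integral_prod_mul (fun q : ℝ × ℝ => q.1) (fun v : ℝ => 2 * (v ^ 2 * (1 - v) ^ 2))
    rw [hsplit, integral_add s15 h6, integral_add s14 h5,
      integral_add s13 h4, integral_add s12 h3, integral_add h1 h2, hρdef,
      T1, T2, T3, T4, T5, T6, Ea, Eb, Eab, Ea2, Eb2, t4, t4', tm, t4'']
    simp
  have hm2 : m2 = 11 / 9 := by rw [hm1] at e2; linarith
  -- conclude
  have hU2 : ∫ ω, (U ω) ^ 2 ∂ℙ = m2 := by
    rw [hm2def, hμdef, integral_map hUm.aemeasurable ((continuous_pow 2).aestronglyMeasurable)]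
  have hU1 : ∫ ω, U ω ∂ℙ = m1 := by
    rw [hm1def, hμdef]
    exact (integral_map hUm.aemeasurable measurable_id.aestronglyMeasurable).symm
  refine ⟨by rw [hU2, hm2], ?_⟩
  have hL2 : MemLp U 2 ℙ := (memLp_two_iff_integrable_sq hUm.aestronglyMeasurable).mpr hint2
  rw [variance_eq_sub hL2]
  have : ∫ ω, (U ^ 2) ω ∂ℙ = ∫ ω, (U ω) ^ 2 ∂ℙ := by
    congr 1
  rw [this, hU2, hU1, hm1, hm2]
  norm_num
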